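/- Let n be a positive integer and let M be a positive-definite symmetric real 2n×2n matrix (indexed by Fin n × Fin 2). Then there exist a symplectic matrix S over ℝ and a function d : Fin n → ℝ with d i > 0 for all i, such that Sᵀ * M * S is the diagonal matrix whose entries at both (i,0) and (i,1) equal d i, for every i : Fin n. (In particular, every positive-definite symmetric matrix can be diagonalized by a symplectic matrix.) -/

import Mathlib

open Matrix Module

/-- The standard symplectic form on `ℝ^(2n)`, with indices `Fin n × Fin 2`. -/
def OmegaStd (n : ℕ) : Matrix (Fin n × Fin 2) (Fin n × Fin 2) ℝ :=
  fun x y =>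
    if x.1 = y.1 ∧ x.2 = 0 ∧ y.2 = 1 then 1
    else if x.1 = y.1 ∧ x.2 = 1 ∧ y.2 = 0 then -1
    else 0

local notation "⟪" x ", " y "⟫" => @inner ℝ _ _ x y

theorem skew_pairs (m : ℕ) :
    ∀ (E : Type) [NormedAddCommGroup E] [InnerProductSpace ℝ E]
      [FiniteDimensional ℝ E], finrank ℝ E = 2 * m →
      ∀ K : E →ₗ[ℝ] E, (∀ x y : E, ⟪K x, y⟫ = -⟪x, K y⟫) → Function.Injective K →
      ∃ (w : Fin m × Fin 2 → E) (μ : Fin m → ℝ),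
        Orthonormal ℝ w ∧ (∀ i, 0 < μ i) ∧
        (∀ i, K (w (i, 1)) = μ i • w (i, 0)) ∧
        (∀ i, K (w (i, 0)) = -μ i • w (i, 1)) := by
  induction m with
  | zero =>
    intro E _ _ _ _ K _ _
    exact ⟨fun x => 0, fun i => i.elim0, ⟨fun i => i.1.elim0, fun {i j} _ => i.1.elim0⟩,
      fun i => i.elim0, fun i => i.elim0, fun i => i.elim0⟩
  | succ m ih =>
    intro E _ _ _ hE K hskew hKinj
    -- the symmetric positive operator -K²
    have hAsym : LinearMap.IsSymmetric (-(K ∘ₗ K)) := by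
      intro x y
      have h1 : ⟪K (K x), y⟫ = -⟪K x, K y⟫ := hskew (K x) y
      have h2 : ⟪K x, K y⟫ = -⟪x, K (K y)⟫ := hskew x (K y)
      simp only [LinearMap.neg_apply, LinearMap.comp_apply, inner_neg_left, inner_neg_right]
      rw [h1]; rw [h2]; ring
    set i₀ : Fin (2 * (m + 1)) := ⟨0, by omega⟩ with hi₀
    set lam : ℝ := hAsym.eigenvalues hE i₀ with hlam
    set u : E := hAsym.eigenvectorBasis hE i₀ with hudef
    have hu1 : ‖u‖ = 1 := (hAsym.eigenvectorBasis hE).orthonormal.1 i₀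
    have huu : ⟪u, u⟫ = 1 := by
      rw [real_inner_self_eq_norm_sq, hu1]; norm_num
    have hu0 : u ≠ 0 := by
      intro h; rw [h, norm_zero] at hu1; exact one_ne_zero hu1.symm
    have hAu : (-(K ∘ₗ K)) u = lam • u :=
      (hAsym.hasEigenvector_eigenvectorBasis hE i₀).apply_eq_smul
    have hKKu : K (K u) = -(lam • u) := by
      have := hAu
      simp only [LinearMap.neg_apply, LinearMap.comp_apply] at this
      linear_combination (norm := module) -this
    have hKu0 : K u ≠ 0 := by
      intro h
      have : K u = K 0 := by rw [h, map_zero]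
      exact hu0 (hKinj this)
    have hlameq : lam = ⟪K u, K u⟫ := by
      have h1 : ⟪K (K u), u⟫ = -⟪K u, K u⟫ := hskew (K u) u
      have h2 : ⟪K (K u), u⟫ = -(lam * ⟪u, u⟫) := by
        rw [hKKu, inner_neg_left, real_inner_smul_left]
      rw [huu] at h2
      have := h1.symm.trans h2
      linarith [this]
    have hlampos : 0 < lam := by
      rw [hlameq, real_inner_self_eq_norm_sq]
      exact pow_pos (norm_pos_iff.mpr hKu0) 2
    set μ₀ : ℝ := Real.sqrt lam with hμ₀def
    have hμ₀pos : 0 < μ₀ := Real.sqrt_pos.2 hlampos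
    have hμsq : μ₀ * μ₀ = lam := Real.mul_self_sqrt hlampos.le
    set v : E := μ₀⁻¹ • K u with hvdef
    have hKu : K u = μ₀ • v := by
      rw [hvdef, smul_smul, mul_inv_cancel₀ hμ₀pos.ne', one_smul]
    have hKv : K v = -μ₀ • u := by
      rw [hvdef, K.map_smul, hKKu, smul_neg, smul_smul]
      have : μ₀⁻¹ * lam = μ₀ := by
        field_simp [← hμsq]
        linear_combination -hμsq
      rw [this, neg_smul]
    have hvv : ⟪v, v⟫ = 1 := by
      rw [hvdef, real_inner_smul_left, real_inner_smul_right, ← hlameq, ← hμsq]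
      field_simp
    have huKu : ⟪u, K u⟫ = 0 := by
      have h1 : ⟪K u, u⟫ = -⟪u, K u⟫ := hskew u u
      have h2 : ⟪K u, u⟫ = ⟪u, K u⟫ := real_inner_comm _ _
      linarith [h1.symm.trans h2]
    have huv : ⟪u, v⟫ = 0 := by
      rw [hvdef, real_inner_smul_right, huKu, mul_zero]
    have hvu : ⟪v, u⟫ = 0 := by rw [real_inner_comm, huv]
    clear_value i₀ lam u μ₀ v
    clear hi₀ hlam hudef hvdef hμ₀def hAu hKKu hμsq hlameq huKu
    -- the span of u, v
    set P : Submodule ℝ E := Submodule.span ℝ {u, v} with hPdef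
    have hPu : u ∈ P := Submodule.subset_span (by simp)
    have hPv : v ∈ P := Submodule.subset_span (by simp)
    have hxKu : ∀ x ∈ Pᗮ, ⟪u, K x⟫ = 0 := by
      intro x hx
      have hxv : ⟪v, x⟫ = 0 := (Submodule.mem_orthogonal _ _).1 hx v hPv
      rw [real_inner_comm]
      rw [hskew x u, hKu, real_inner_smul_right, real_inner_comm, hxv]
      ring
    have hxKv : ∀ x ∈ Pᗮ, ⟪v, K x⟫ = 0 := by
      intro x hx
      have hxu : ⟪u, x⟫ = 0 := (Submodule.mem_orthogonal _ _).1 hx u hPu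
      rw [real_inner_comm]
      rw [hskew x v, hKv, real_inner_smul_right, real_inner_comm, hxu]
      ring
    have hinvP : ∀ x ∈ Pᗮ, K x ∈ Pᗮ := by
      intro x hx
      rw [Submodule.mem_orthogonal]
      intro p hp
      obtain ⟨a, b, rfl⟩ := Submodule.mem_span_pair.1 hp
      rw [inner_add_left, real_inner_smul_left, real_inner_smul_left,
        hxKu x hx, hxKv x hx]
      ring
    -- orthonormal pair and dimension count
    have hv1 : ‖v‖ = 1 := by rw [norm_eq_sqrt_real_inner, hvv, Real.sqrt_one]
    have honb : Orthonormal ℝ ![u, v] := by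
      rw [orthonormal_iff_ite]
      intro i j
      fin_cases i <;> fin_cases j <;>
        simp [huu, hvv, huv, hvu, hu1, hv1]
    have hrange : Set.range ![u, v] = {u, v} := by
      ext z
      simp [Fin.exists_fin_two, or_comm]
    have hfinP : finrank ℝ P = 2 := by
      have h := finrank_span_eq_card honb.linearIndependent
      rw [hrange] at h
      rw [hPdef, h]
      simp
    have hfinP' : finrank ℝ ↥Pᗮ = 2 * m := by
      have h := P.finrank_add_finrank_orthogonal
      rw [hfinP, hE] at h
      omega
    -- restrict K to the orthogonal complement and apply the IH
    set K' : ↥Pᗮ →ₗ[ℝ] ↥Pᗮ := K.restrict hinvP with hK'def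
    have hK'coe : ∀ x : ↥Pᗮ, (K' x : E) = K (x : E) := fun x => rfl
    have hskew' : ∀ x y : ↥Pᗮ, ⟪K' x, y⟫ = -⟪x, K' y⟫ := by
      intro x y
      rw [Submodule.coe_inner, Submodule.coe_inner, hK'coe, hK'coe]
      exact hskew _ _
    have hinj' : Function.Injective K' := by
      intro x y h
      apply Subtype.ext
      apply hKinj
      have := congrArg (Subtype.val) h
      rwa [hK'coe, hK'coe] at this
    obtain ⟨w', μ', hw'on, hμ'pos, h1', h0'⟩ := ih ↥Pᗮ hfinP' K' hskew' hinj'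
    -- assemble
    refine ⟨fun x => Fin.cases (motive := fun _ => E) (if x.2 = 0 then v else u)
        (fun i => (w' (i, x.2) : E)) x.1,
      Fin.cases μ₀ μ', ?_, ?_, ?_, ?_⟩
    · rw [orthonormal_iff_ite]
      rintro ⟨i, a⟩ ⟨j, b⟩
      have hw'mem : ∀ (k : Fin m) (c : Fin 2), ((w' (k, c) : E)) ∈ Pᗮ :=
        fun k c => Submodule.coe_mem _
      have hperpu : ∀ (k : Fin m) (c : Fin 2), ⟪u, (w' (k, c) : E)⟫ = 0 :=
        fun k c => (Submodule.mem_orthogonal _ _).1 (hw'mem k c) u hPu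
      have hperpv : ∀ (k : Fin m) (c : Fin 2), ⟪v, (w' (k, c) : E)⟫ = 0 :=
        fun k c => (Submodule.mem_orthogonal _ _).1 (hw'mem k c) v hPv
      induction i using Fin.cases with
      | zero =>
        induction j using Fin.cases with
        | zero =>
          fin_cases a <;> fin_cases b <;>
            simp [huu, hvv, huv, hvu, Prod.ext_iff, hu1, hv1]
        | succ j =>
          fin_cases a <;>
            simp [Prod.ext_iff, Fin.succ_ne_zero j, (Fin.succ_ne_zero j).symm,
              hperpu, hperpv]
      | succ i =>
        induction j using Fin.cases with
        | zero =>
          rw [real_inner_comm]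
          fin_cases b <;>
            simp [Prod.ext_iff, Fin.succ_ne_zero i, (Fin.succ_ne_zero i).symm,
              hperpu, hperpv]
        | succ j =>
          simp only [Fin.cases_succ]
          rw [← Submodule.coe_inner, orthonormal_iff_ite.1 hw'on (i, a) (j, b)]
          simp [Prod.ext_iff, Fin.succ_inj]
    · intro i
      induction i using Fin.cases with
      | zero => simpa using hμ₀pos
      | succ i => simpa using hμ'pos i
    · intro i
      induction i using Fin.cases with
      | zero =>
        simpa using hKu
      | succ i =>
        simp only [Fin.cases_succ]
        rw [← hK'coe, h1' i]
        simp
    · intro i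
      induction i using Fin.cases with
      | zero =>
        simpa using hKv
      | succ i =>
        simp only [Fin.cases_succ]
        rw [← hK'coe, h0' i]
        simp

theorem skew_matrix_form (n : ℕ) (K : Matrix (Fin n × Fin 2) (Fin n × Fin 2) ℝ)
    (hskew : Kᵀ = -K) (hK : IsUnit K.det) :
    ∃ (O : Matrix (Fin n × Fin 2) (Fin n × Fin 2) ℝ) (μ : Fin n → ℝ),
      Oᵀ * O = 1 ∧ (∀ i, 0 < μ i) ∧
      ∀ x y, (Oᵀ * K * O) x y =
        if x.1 = y.1 ∧ x.2 = 0 ∧ y.2 = 1 then μ x.1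
        else if x.1 = y.1 ∧ x.2 = 1 ∧ y.2 = 0 then -μ x.1 else 0 := by
  classical
  have hinner : ∀ a b : EuclideanSpace ℝ (Fin n × Fin 2), ⟪a, b⟫ = ∑ i, a i * b i := by
    intro a b
    rw [PiLp.inner_apply]
    simp [mul_comm]
  set Klin := Matrix.toEuclideanLin K with hKlindef
  have hKlin : ∀ (x : EuclideanSpace ℝ (Fin n × Fin 2)) (a : Fin n × Fin 2),
      Klin x a = ∑ b, K a b * x b := fun x a => rfl
  have hK' : ∀ a b, K b a = -K a b := by
    intro a b
    have := congrFun (congrFun hskew a) b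
    simpa using this
  have hKskew : ∀ x y : EuclideanSpace ℝ (Fin n × Fin 2), ⟪Klin x, y⟫ = -⟪x, Klin y⟫ := by
    intro x y
    rw [hinner, hinner]
    simp only [hKlin, Finset.sum_mul, Finset.mul_sum]
    rw [Finset.sum_comm, ← Finset.sum_neg_distrib]
    refine Finset.sum_congr rfl fun b _ => ?_
    rw [← Finset.sum_neg_distrib]
    refine Finset.sum_congr rfl fun a _ => ?_
    rw [hK' a b]
    ring
  have hKinj : Function.Injective Klin := by
    have h1 : Function.Injective (K.mulVec) :=
      Matrix.mulVec_injective_iff_isUnit.2 ((Matrix.isUnit_iff_isUnit_det K).2 hK)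
    intro x y h
    have h2 := congrArg (⇑(WithLp.equiv 2 ((Fin n × Fin 2) → ℝ))) h
    rw [hKlindef] at h2
    simp only [WithLp.equiv_apply, Matrix.ofLp_toEuclideanLin_apply] at h2
    exact (WithLp.equiv 2 _).injective (h1 h2)
  have hfin : finrank ℝ (EuclideanSpace ℝ (Fin n × Fin 2)) = 2 * n := by
    simp [finrank_euclideanSpace]
    ring
  obtain ⟨w, μ, hw, hμ, h1, h0⟩ :=
    skew_pairs n (EuclideanSpace ℝ (Fin n × Fin 2)) hfin Klin hKskew hKinj
  set O : Matrix (Fin n × Fin 2) (Fin n × Fin 2) ℝ := Matrix.of fun a y => w y a with hOdef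
  have key : ∀ x y, (Oᵀ * K * O) x y = ⟪w x, Klin (w y)⟫ := by
    intro x y
    rw [hinner]
    simp only [hKlin, hOdef, Matrix.mul_apply, Matrix.transpose_apply, Matrix.of_apply,
      Finset.sum_mul, Finset.mul_sum]
    rw [Finset.sum_comm]
    refine Finset.sum_congr rfl fun a _ => ?_
    refine Finset.sum_congr rfl fun b _ => ?_
    ring
  refine ⟨O, μ, ?_, hμ, ?_⟩
  · ext x y
    have hxy := orthonormal_iff_ite.1 hw x y
    rw [hinner] at hxy
    simp only [hOdef, Matrix.mul_apply, Matrix.transpose_apply, Matrix.of_apply,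
      Matrix.one_apply]
    exact hxy
  · rintro ⟨xi, xa⟩ ⟨j, b⟩
    obtain rfl | rfl : b = 0 ∨ b = 1 := by omega
    · rw [key, h0 j, inner_smul_right]
      have hxy := orthonormal_iff_ite.1 hw (xi, xa) (j, 1)
      rw [hxy]
      obtain rfl | rfl : xa = 0 ∨ xa = 1 := by omega
      · simp [Prod.ext_iff]
      · by_cases hij : xi = j
        · subst hij; simp
        · simp [Prod.ext_iff, hij]
    · rw [key, h1 j, inner_smul_right]
      have hxy := orthonormal_iff_ite.1 hw (xi, xa) (j, 0)
      rw [hxy]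
      obtain rfl | rfl : xa = 0 ∨ xa = 1 := by omega
      · by_cases hij : xi = j
        · subst hij; simp
        · simp [Prod.ext_iff, hij]
      · simp [Prod.ext_iff]

theorem omega_transpose (n : ℕ) : (OmegaStd n)ᵀ = -(OmegaStd n) := by
  ext ⟨i, a⟩ ⟨j, b⟩
  simp only [Matrix.transpose_apply, Matrix.neg_apply, OmegaStd]
  rcases (show a = 0 ∨ a = 1 by omega) with rfl | rfl <;>
    rcases (show b = 0 ∨ b = 1 by omega) with rfl | rfl <;>
      (try simp [eq_comm]) <;> split_ifs <;> norm_num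

theorem omega_mul_transpose (n : ℕ) : OmegaStd n * (OmegaStd n)ᵀ = 1 := by
  ext ⟨i, a⟩ ⟨j, b⟩
  rw [Matrix.mul_apply]
  simp only [Matrix.transpose_apply, OmegaStd, Fintype.sum_prod_type, Fin.sum_univ_two]
  rcases (show a = 0 ∨ a = 1 by omega) with rfl | rfl <;>
    rcases (show b = 0 ∨ b = 1 by omega) with rfl | rfl <;>
      simp [Matrix.one_apply, Prod.ext_iff, Finset.sum_ite_eq, Finset.sum_ite_eq',
        eq_comm, mul_ite, ite_mul, mul_one, mul_zero, one_mul, zero_mul] <;>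
      split_ifs <;> norm_num

/-- Weierstrass' theorem: every positive-definite symmetric real matrix can be
diagonalized by a symplectic matrix, with positive diagonal entries coming in
equal pairs. -/
theorem posdef_symplectic_diagonalization
    (n : ℕ) (hn : 0 < n)
    (M : Matrix (Fin n × Fin 2) (Fin n × Fin 2) ℝ) (hM : M.PosDef) :
    ∃ (S : Matrix (Fin n × Fin 2) (Fin n × Fin 2) ℝ) (d : Fin n → ℝ),
      Sᵀ * OmegaStd n * S = OmegaStd n ∧
      (∀ i : Fin n, 0 < d i) ∧
      Sᵀ * M * S = Matrix.diagonal (fun x : Fin n × Fin 2 => d x.1) := by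
  classical
  open scoped MatrixOrder in
  set R := CFC.sqrt M with hRdef
  open scoped MatrixOrder in
  have hRR : R * R = M := CFC.sqrt_mul_sqrt_self M (Matrix.nonneg_iff_posSemidef.2 hM.posSemidef)
  have hRT : Rᵀ = R := by
    open scoped MatrixOrder in
    have h := (Matrix.nonneg_iff_posSemidef.1 (CFC.sqrt_nonneg M)).1
    rwa [Matrix.IsHermitian, Matrix.conjTranspose_eq_transpose_of_trivial] at h
  have hRdetu : IsUnit R.det := by
    have h1 : R.det * R.det = M.det := by rw [← Matrix.det_mul, hRR]
    have h2 : (0 : ℝ) < M.det := hM.det_pos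
    rw [isUnit_iff_ne_zero]
    intro h
    rw [h, mul_zero] at h1
    exact h2.ne h1
  have hΩdetu : IsUnit (OmegaStd n).det := by
    have h := omega_mul_transpose n
    have := congrArg Matrix.det h
    rw [Matrix.det_mul, Matrix.det_one] at this
    exact IsUnit.of_mul_eq_one _ this
  set K : Matrix (Fin n × Fin 2) (Fin n × Fin 2) ℝ := R⁻¹ * OmegaStd n * R⁻¹ with hKdef
  have hRinvT : (R⁻¹)ᵀ = R⁻¹ := by rw [Matrix.transpose_nonsing_inv, hRT]
  have hKT : Kᵀ = -K := by
    rw [hKdef, Matrix.transpose_mul, Matrix.transpose_mul, hRinvT, omega_transpose,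
      Matrix.neg_mul, Matrix.mul_neg, Matrix.mul_assoc]
  have hKdetu : IsUnit K.det := by
    rw [hKdef, Matrix.det_mul, Matrix.det_mul]
    exact ((R.isUnit_nonsing_inv_det hRdetu).mul hΩdetu).mul
      (R.isUnit_nonsing_inv_det hRdetu)
  obtain ⟨O, μ, hO, hμpos, hOKO⟩ := skew_matrix_form n K hKT hKdetu
  set c : Fin n × Fin 2 → ℝ := fun x => (Real.sqrt (μ x.1))⁻¹ with hcdef
  have hsqrt_pos : ∀ i, 0 < Real.sqrt (μ i) := fun i => Real.sqrt_pos.2 (hμpos i)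
  set S := R⁻¹ * O * Matrix.diagonal c with hSdef
  have hST : Sᵀ = Matrix.diagonal c * (Oᵀ * R⁻¹) := by
    rw [hSdef, Matrix.transpose_mul, Matrix.transpose_mul, hRinvT,
      Matrix.diagonal_transpose]
  have hOKO' : Oᵀ * K * O = Matrix.of fun x y =>
      if x.1 = y.1 ∧ x.2 = 0 ∧ y.2 = 1 then μ x.1
      else if x.1 = y.1 ∧ x.2 = 1 ∧ y.2 = 0 then -μ x.1 else 0 := by
    ext x y; exact hOKO x y
  have hentry : ∀ (A : Matrix (Fin n × Fin 2) (Fin n × Fin 2) ℝ) x y,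
      (Matrix.diagonal c * A * Matrix.diagonal c) x y = c x * A x y * c y := by
    intro A x y
    rw [Matrix.mul_diagonal, Matrix.diagonal_mul]
  have hkey : ∀ a : ℝ, 0 < a → (Real.sqrt a)⁻¹ * a * (Real.sqrt a)⁻¹ = 1 := by
    intro a ha
    rw [mul_comm (Real.sqrt a)⁻¹ a, mul_assoc, ← mul_inv, Real.mul_self_sqrt ha.le,
      mul_inv_cancel₀ ha.ne']
  refine ⟨S, fun i => (μ i)⁻¹, ?_, fun i => inv_pos.2 (hμpos i), ?_⟩
  · have hexp : Sᵀ * OmegaStd n * S = Matrix.diagonal c * (Oᵀ * K * O) * Matrix.diagonal c := by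
      rw [hST, hSdef, hKdef]
      simp only [Matrix.mul_assoc]
    rw [hexp, hOKO']
    ext x y
    rw [hentry]
    simp only [Matrix.of_apply, OmegaStd]
    by_cases hc1 : x.1 = y.1 ∧ x.2 = 0 ∧ y.2 = 1
    · rw [if_pos hc1, if_pos hc1]
      simp only [hcdef]
      obtain ⟨he, -, -⟩ := hc1
      rw [← he]
      exact hkey _ (hμpos x.1)
    · rw [if_neg hc1, if_neg hc1]
      by_cases hc2 : x.1 = y.1 ∧ x.2 = 1 ∧ y.2 = 0
      · rw [if_pos hc2, if_pos hc2]
        simp only [hcdef]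
        obtain ⟨he, -, -⟩ := hc2
        rw [← he]
        rw [mul_neg, neg_mul, hkey _ (hμpos x.1)]
      · rw [if_neg hc2, if_neg hc2, mul_zero, zero_mul]
  · have h3 : M * R⁻¹ = R := by
      rw [← hRR, Matrix.mul_assoc, Matrix.mul_nonsing_inv _ hRdetu, Matrix.mul_one]
    have hexp : Sᵀ * M * S =
        Matrix.diagonal c * (Oᵀ * (R⁻¹ * (M * (R⁻¹ * (O * Matrix.diagonal c))))) := by
      rw [hST, hSdef]
      simp only [Matrix.mul_assoc]
    rw [hexp, ← Matrix.mul_assoc M R⁻¹, h3, Matrix.nonsing_inv_mul_cancel_left _ _ hRdetu,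
      ← Matrix.mul_assoc Oᵀ O (Matrix.diagonal c), hO, Matrix.one_mul,
      Matrix.diagonal_mul_diagonal]
    have hcc : (fun i : Fin n × Fin 2 => c i * c i) = fun x : Fin n × Fin 2 => (μ x.1)⁻¹ := by
      funext x
      simp only [hcdef]
      rw [← mul_inv, Real.mul_self_sqrt (hμpos x.1).le]
    rw [hcc]
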